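/- arXiv:2109.13106 — 2 statements merged into one kernel-verified Lean document; each statement's English description precedes it below -/
import Mathlib

section
/- Let d be a positive even integer. For i = 1, …, d+1 and t ∈ ℝ, define q_i(t) = (1 − t)·e_i + t·e_{i+1} ∈ ℝ^{d+1}, where e₁, …, e_{d+1} is the standard basis and indices are cyclic (e_{d+2} = e₁). Then for every t ∈ ℝ, the vectors q₁(t), …, q_{d+1}(t) are linearly independent. Consequently, at no time t do all d+1 moving points q_i(t), which all lie in the affine hyperplane {x ∈ ℝ^{d+1} : Σ_j x_j = 1}, lie in a common (d−1)-dimensional affine subspace of that hyperplane. -/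
open Module
open Fin.NatCast

/-- For even `d`, the `d+1` moving points `q_i(t) = (1-t)e_i + t e_{i+1}` (cyclic indices) in
`ℝ^{d+1}` are linearly independent for every time `t`; consequently, they all lie in the
affine hyperplane `{x : Σ_j x_j = 1}` but at no time do they lie in a common
`(d-1)`-dimensional affine subspace of that hyperplane. -/
theorem moving_points_never_coplanar (d : ℕ) (hd : 1 ≤ d) (heven : Even d)
    (q : Fin (d + 1) → ℝ → EuclideanSpace ℝ (Fin (d + 1)))
    (hq : ∀ i t, q i t = (1 - t) • EuclideanSpace.single i (1 : ℝ)
      + t • EuclideanSpace.single (i + 1) (1 : ℝ)) :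
    ∀ t : ℝ,
      LinearIndependent ℝ (fun i => q i t) ∧
      (∀ i, (∑ j, q i t j) = 1) ∧
      ¬ ∃ L : AffineSubspace ℝ (EuclideanSpace ℝ (Fin (d + 1))),
          finrank ℝ L.direction = d - 1 ∧
          (L : Set (EuclideanSpace ℝ (Fin (d + 1)))) ⊆ {x | (∑ j, x j) = 1} ∧
          ∀ i, q i t ∈ L := by
  intro t
  have hodd : Odd (d + 1) := Even.add_one heven
  -- the key nonvanishing quantity
  have hne : (1 - t) ^ (d + 1) + t ^ (d + 1) ≠ 0 := by
    intro h
    have h1 : (1 - t) ^ (d + 1) = (-t) ^ (d + 1) := by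
      rw [hodd.neg_pow]; linarith
    have := hodd.strictMono_pow (R := ℝ).injective h1
    linarith
  -- kernel triviality
  have key : ∀ g : Fin (d + 1) → ℝ, (∑ i, g i • q i t) = 0 → ∀ j, g j = 0 := by
    intro g hg j
    -- coordinatewise relation
    have hco : ∀ j : Fin (d + 1), (1 - t) * g (j + 1) = -t * g j := by
      intro j
      have h0 : (∑ i, g i • q i t) (j + 1) = (0 : EuclideanSpace ℝ (Fin (d + 1))) (j + 1) := by
        rw [hg]
      have : (∑ i, g i • q i t) (j + 1) = (1 - t) * g (j + 1) + t * g j := by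
        rw [WithLp.ofLp_sum, Finset.sum_apply]
        have step : ∀ i : Fin (d + 1), (g i • q i t) (j + 1)
            = (if (j + 1 : Fin (d + 1)) = i then g i * (1 - t) else 0)
              + (if i = j then g i * t else 0) := by
          intro i
          have h2 : ((j + 1 : Fin (d + 1)) = i + 1) ↔ i = j := by
            rw [add_left_inj, eq_comm]
          simp only [hq, PiLp.smul_apply, PiLp.add_apply, smul_eq_mul,
            EuclideanSpace.single_apply, h2]
          split_ifs <;> ring
        rw [Finset.sum_congr rfl fun i _ => step i, Finset.sum_add_distrib,
          Finset.sum_ite_eq, Finset.sum_ite_eq']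
        simp
        ring
      have h1 : (1 - t) * g (j + 1) + t * g j = 0 := by
        rw [← this, h0]; rfl
      linarith
    have pow : ∀ k : ℕ, (1 - t) ^ k * g (j + (k : Fin (d + 1))) = (-t) ^ k * g j := by
      intro k
      induction k with
      | zero => simp
      | succ k ih =>
        have hcast : (((k : ℕ) + 1 : ℕ) : Fin (d + 1)) = (k : Fin (d + 1)) + 1 := by
          push_cast; ring
        calc (1 - t) ^ (k + 1) * g (j + ((k + 1 : ℕ) : Fin (d + 1)))
            = (1 - t) ^ k * ((1 - t) * g ((j + (k : Fin (d + 1))) + 1)) := by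
              rw [hcast, ← add_assoc]; ring
          _ = (1 - t) ^ k * (-t * g (j + (k : Fin (d + 1)))) := by rw [hco]
          _ = -t * ((1 - t) ^ k * g (j + (k : Fin (d + 1)))) := by ring
          _ = -t * ((-t) ^ k * g j) := by rw [ih]
          _ = (-t) ^ (k + 1) * g j := by ring
    have hfull := pow (d + 1)
    rw [Fin.natCast_self, add_zero] at hfull
    have : ((1 - t) ^ (d + 1) + t ^ (d + 1)) * g j = 0 := by
      rw [hodd.neg_pow] at hfull
      linarith
    exact (mul_eq_zero.1 this).resolve_left hne
  have hli : LinearIndependent ℝ (fun i => q i t) := by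
    rw [Fintype.linearIndependent_iff]
    exact key
  refine ⟨hli, ?_, ?_⟩
  · intro i
    simp only [hq, PiLp.add_apply, PiLp.smul_apply, smul_eq_mul, EuclideanSpace.single_apply]
    rw [Finset.sum_add_distrib]
    simp [Finset.sum_ite_eq', mul_comm]
  · rintro ⟨L, hdim, -, hmem⟩
    have haff : AffineIndependent ℝ (fun i => q i t) :=
      affineIndependent_iff.2 fun s w _ hsum e he => linearIndependent_iff'.1 hli s w hsum e he
    have hspan : finrank ℝ (vectorSpan ℝ (Set.range fun i => q i t)) = d :=
      haff.finrank_vectorSpan (by simp)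
    have hle : vectorSpan ℝ (Set.range fun i => q i t) ≤ L.direction := by
      rw [AffineSubspace.direction_eq_vectorSpan]
      exact vectorSpan_mono ℝ (Set.range_subset_iff.2 hmem)
    have := Submodule.finrank_mono hle
    rw [hspan, hdim] at this
    omega
end

section
/- Let d ≥ 1 and let μ be a finite measure on ℝ^d. Then there exists a point x ∈ ℝ^d such that every closed half-space of ℝ^d containing x has μ-measure at least μ(ℝ^d)/(d+1). -/
open MeasureTheory
open scoped RealInnerProductSpace ENNReal

/-- **Rado's centerpoint theorem.** Every finite measure on `ℝ^d` has a centerpoint: a point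
`x` such that every closed half-space `{y : ⟪y, v⟫ ≥ c}` containing `x` has measure at least
`μ(ℝ^d)/(d+1)`. -/
theorem centerpoint (d : ℕ) (hd : 1 ≤ d)
    (μ : Measure (EuclideanSpace ℝ (Fin d))) [IsFiniteMeasure μ] :
    ∃ x : EuclideanSpace ℝ (Fin d),
      ∀ v : EuclideanSpace ℝ (Fin d), v ≠ 0 → ∀ c : ℝ, ⟪x, v⟫ ≥ c →
        μ {y | ⟪y, v⟫ ≥ c} ≥ μ Set.univ / ((d + 1 : ℕ) : ℝ≥0∞) := by
  classical
  set E := EuclideanSpace ℝ (Fin d) with hE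
  by_cases ht : μ Set.univ = 0
  · exact ⟨0, fun v _ c _ => by simp [ht]⟩
  set a : ℝ≥0∞ := μ Set.univ / ((d + 1 : ℕ) : ℝ≥0∞) with ha
  have hd1 : ((d + 1 : ℕ) : ℝ≥0∞) ≠ 0 := by simp
  have hd2 : ((d + 1 : ℕ) : ℝ≥0∞) ≠ ∞ := ENNReal.natCast_ne_top _
  have ha_pos : 0 < a := ENNReal.div_pos ht hd2
  have hcont : ∀ v : E, Continuous fun y : E => (⟪y, v⟫ : ℝ) :=
    fun v => continuous_id.inner continuous_const
  have hclosed : ∀ (v : E) (c : ℝ), IsClosed {y : E | ⟪y, v⟫ ≥ c} := fun v c =>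
    isClosed_le continuous_const (hcont v)
  have hclosed' : ∀ (v : E) (c : ℝ), IsClosed {y : E | ⟪y, v⟫ ≤ c} := fun v c =>
    isClosed_le (hcont v) continuous_const
  have hconv : ∀ (v : E) (c : ℝ), Convex ℝ {y : E | ⟪y, v⟫ ≤ c} := fun v c =>
    convex_halfSpace_le
      ⟨fun x y => inner_add_left x y v, fun r x => real_inner_smul_left x v r⟩ c
  -- choose a big closed ball whose complement has small measure
  obtain ⟨n, hn⟩ : ∃ n : ℕ, μ (Metric.closedBall (0 : E) n)ᶜ < a := by
    have h1 : Filter.Tendsto (fun n : ℕ => μ (Metric.closedBall (0 : E) n)ᶜ) Filter.atTop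
        (nhds (μ (⋂ n : ℕ, (Metric.closedBall (0 : E) n)ᶜ))) :=
      tendsto_measure_iInter_atTop
        (fun n => Metric.isClosed_closedBall.measurableSet.compl.nullMeasurableSet)
        (fun k m hkm => Set.compl_subset_compl.mpr
          (Metric.closedBall_subset_closedBall (by exact_mod_cast hkm)))
        ⟨0, measure_ne_top μ _⟩
    have h2 : (⋂ n : ℕ, (Metric.closedBall (0 : E) n)ᶜ) = ∅ := by
      ext y
      simp only [Set.mem_iInter, Set.mem_compl_iff, Metric.mem_closedBall,
        Set.mem_empty_iff_false, iff_false, not_forall, not_not]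
      exact exists_nat_ge (dist y 0)
    rw [h2, measure_empty] at h1
    exact (h1.eventually_lt_const ha_pos).exists
  set B : Set E := Metric.closedBall (0 : E) n with hB
  -- the family of closed half-spaces whose "complementary" half-space has small measure
  set ι' := {p : E × ℝ // μ {y : E | ⟪y, p.1⟫ ≥ p.2} < a} with hι'
  set Z : ι' → Set E := fun p => {y : E | ⟪y, p.1.1⟫ ≤ p.1.2} with hZ
  have key : (B ∩ ⋂ p : ι', Z p).Nonempty := by
    by_contra hkey
    rw [Set.not_nonempty_iff_eq_empty] at hkey
    obtain ⟨s, hs⟩ := (isCompact_closedBall (0 : E) (n : ℝ)).elim_finite_subfamily_closed Z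
      (fun p => hclosed' _ _) hkey
    set G : Option ι' → Set E := fun o => o.elim B Z with hG
    set s' : Finset (Option ι') := insert none (s.image some) with hs'
    have hcompl : ∀ o ∈ s', μ (G o)ᶜ < a := by
      rintro (_ | p) ho
      · exact hn
      · refine lt_of_le_of_lt (measure_mono ?_) p.2
        intro y hy
        simp only [Set.mem_compl_iff, hG, Option.elim, hZ, Set.mem_setOf_eq, not_le] at hy
        have hy' : ¬ (⟪y, p.1.1⟫ ≤ p.1.2) := hy
        exact le_of_lt (not_le.mp hy')
    have hHelly : (⋂ o ∈ s', G o).Nonempty := by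
      apply Convex.helly_theorem' (𝕜 := ℝ)
      · rintro (_ | p) ho
        · exact convex_closedBall _ _
        · exact hconv _ _
      · intro I hI hIcard
        rcases I.eq_empty_or_nonempty with rfl | hne
        · simp
        have hsum : ∑ o ∈ I, μ (G o)ᶜ < μ Set.univ := by
          calc ∑ o ∈ I, μ (G o)ᶜ < ∑ _o ∈ I, a :=
                ENNReal.sum_lt_sum_of_nonempty hne (fun o ho => hcompl o (hI ho))
            _ = (I.card : ℝ≥0∞) * a := by rw [Finset.sum_const, nsmul_eq_mul]
            _ ≤ ((d + 1 : ℕ) : ℝ≥0∞) * a := by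
                refine mul_le_mul_left ?_ a
                exact_mod_cast hIcard.trans_eq (by rw [finrank_euclideanSpace_fin])
            _ = μ Set.univ := ENNReal.mul_div_cancel hd1 hd2
        have hne_univ : (⋃ o ∈ I, (G o)ᶜ) ≠ Set.univ := by
          intro h
          have hle := measure_biUnion_finset_le (μ := μ) I (fun o => (G o)ᶜ)
          rw [h] at hle
          exact absurd (lt_of_le_of_lt hle hsum) (lt_irrefl _)
        obtain ⟨x, hx⟩ : ∃ x, x ∉ ⋃ o ∈ I, (G o)ᶜ := by
          by_contra h
          push_neg at h
          exact hne_univ (Set.eq_univ_of_forall h)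
        refine ⟨x, Set.mem_iInter₂.mpr fun o ho => ?_⟩
        by_contra hxo
        exact hx (Set.mem_biUnion ho hxo)
    obtain ⟨x, hx⟩ := hHelly
    have hx' := Set.mem_iInter₂.1 hx
    have hxB : x ∈ B := hx' none (Finset.mem_insert_self _ _)
    have hxZ : ∀ p ∈ s, x ∈ Z p := fun p hp =>
      hx' (some p) (Finset.mem_insert_of_mem (Finset.mem_image_of_mem some hp))
    have : x ∈ B ∩ ⋂ p ∈ s, Z p := ⟨hxB, Set.mem_iInter₂.mpr hxZ⟩
    rw [hs] at this
    exact this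
  obtain ⟨x, _hxB, hxZ⟩ := key
  refine ⟨x, fun v hv c hxc => ?_⟩
  by_contra hcon
  push_neg at hcon
  have hA : Filter.Tendsto (fun k : ℕ => μ {y : E | ⟪y, v⟫ ≥ c - 1 / (k + 1)}) Filter.atTop
      (nhds (μ (⋂ k : ℕ, {y : E | ⟪y, v⟫ ≥ c - 1 / (k + 1)}))) :=
    tendsto_measure_iInter_atTop
      (fun k => (hclosed v _).measurableSet.nullMeasurableSet)
      (fun k m hkm y hy => by
        simp only [Set.mem_setOf_eq, ge_iff_le] at hy ⊢
        have h1 : (1 : ℝ) / (m + 1) ≤ 1 / (k + 1) := by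
          apply one_div_le_one_div_of_le
          · positivity
          · have : (k : ℝ) ≤ m := by exact_mod_cast hkm
            linarith
        show c - 1 / ((k : ℝ) + 1) ≤ ⟪y, v⟫
        have hy' : c - 1 / ((m : ℝ) + 1) ≤ ⟪y, v⟫ := hy
        linarith)
      ⟨0, measure_ne_top μ _⟩
  have hIeq : (⋂ k : ℕ, {y : E | ⟪y, v⟫ ≥ c - 1 / (k + 1)}) = {y : E | ⟪y, v⟫ ≥ c} := by
    ext y
    simp only [Set.mem_iInter, Set.mem_setOf_eq, ge_iff_le]
    constructor
    · intro h
      by_contra hlt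
      push_neg at hlt
      obtain ⟨k, hk⟩ := exists_nat_one_div_lt (sub_pos.mpr hlt)
      have := h k
      linarith
    · intro h k
      have hk : (0 : ℝ) < 1 / (k + 1) := by positivity
      linarith
  rw [hIeq] at hA
  obtain ⟨k, hk⟩ := (hA.eventually_lt_const hcon).exists
  have hxk := Set.mem_iInter.1 hxZ ⟨(v, c - 1 / (k + 1)), hk⟩
  simp only [hZ, Set.mem_setOf_eq] at hxk
  have h1k : (0 : ℝ) < 1 / (k + 1) := by positivity
  have : (c : ℝ) ≤ ⟪x, v⟫ := hxc
  linarith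
end
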